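/- arXiv:1501.00965 — 2 statements merged into one kernel-verified Lean document; each statement's English description precedes it below -/
import Mathlib

section
/- For every integer m ≥ 2, the infimum of all constants C ≥ 0 such that Σ_{j₁=1}^{N} ( Σ_{j₂,...,j_m=1}^{N} |U(e_{j₁},...,e_{j_m})|² )^{1/2} ≤ C · ‖U‖ holds for every positive integer N and every continuous m-linear form U : (ℝ^N)^m → ℝ (ℝ^N with the sup norm) is exactly (√2)^{m-1}; moreover this infimum is attained, i.e. C = (√2)^{m-1} is a valid constant. -/
open Finset

namespace Littlewood

def sg (b : Bool) : ℝ := b.rec 1 (-1)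

@[simp] lemma sg_false : sg false = 1 := rfl
@[simp] lemma sg_true : sg true = -1 := rfl
lemma sg_xor (b c : Bool) : sg (xor b c) = sg b * sg c := by cases b <;> cases c <;> simp
lemma sg_not (b : Bool) : sg (!b) = -sg b := by cases b <;> simp
lemma sg_mul_self (b : Bool) : sg b * sg b = 1 := by cases b <;> norm_num
@[simp] lemma abs_sg (b : Bool) : |sg b| = 1 := by cases b <;> simp

variable {ι : Type*} [Fintype ι] [DecidableEq ι]

lemma sum_pi_bool_prod (F : ι → Bool → ℝ) :
    ∑ σ : ι → Bool, ∏ i, F i (σ i) = ∏ i, ∑ b : Bool, F i b := by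
  rw [Finset.prod_univ_sum (fun _ => (univ : Finset Bool)) F, Fintype.piFinset_univ]

lemma sum_finset_prod (x : ι → ℝ) :
    ∑ A : Finset ι, ∏ i ∈ A, x i = ∏ i, (x i + 1) := by
  rw [Finset.prod_add]
  simp [Finset.powerset_univ]

lemma prod_mem_sg (A : Finset ι) (σ : ι → Bool) :
    ∏ i ∈ A, sg (σ i) = ∏ i, (if i ∈ A then sg (σ i) else 1) := by
  rw [Finset.prod_ite_mem, Finset.univ_inter]

lemma sum_over_A (ξ : ι → Bool) :
    ∑ A : Finset ι, ∏ i ∈ A, sg (ξ i)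
      = if (∀ i, ξ i = false) then (2:ℝ)^(Fintype.card ι) else 0 := by
  rw [sum_finset_prod]
  by_cases h : ∀ i, ξ i = false
  · simp only [h, if_true, sg_false]
    norm_num
  · rw [if_neg h]
    push_neg at h
    obtain ⟨i, hi⟩ := h
    apply Finset.prod_eq_zero (Finset.mem_univ i)
    have : ξ i = true := by simpa using hi
    simp [this]

lemma orth (A : Finset ι) :
    ∑ σ : ι → Bool, (∏ i ∈ A, sg (σ i))
      = if A = ∅ then (2:ℝ)^(Fintype.card ι) else 0 := by
  have h : ∀ σ : ι → Bool, ∏ i ∈ A, sg (σ i) = ∏ i, (if i ∈ A then sg (σ i) else 1) :=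
    fun σ => prod_mem_sg A σ
  simp_rw [h]
  rw [sum_pi_bool_prod (fun i b => if i ∈ A then sg b else 1)]
  by_cases hA : A = ∅
  · simp [hA]
  · rw [if_neg hA]
    obtain ⟨i, hi⟩ := Finset.nonempty_iff_ne_empty.2 hA
    apply Finset.prod_eq_zero (Finset.mem_univ i)
    simp [hi]

lemma two_point (i k : ι) :
    ∑ σ : ι → Bool, sg (σ i) * sg (σ k)
      = if i = k then (2:ℝ)^(Fintype.card ι) else 0 := by
  by_cases h : i = k
  · subst h
    simp_rw [sg_mul_self]
    simp [Finset.card_univ, Fintype.card_fun]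
  · rw [if_neg h]
    have := orth ({i, k} : Finset ι)
    rw [if_neg (by simp [Finset.insert_ne_empty])] at this
    rw [← this]
    apply Finset.sum_congr rfl
    intro σ _
    rw [Finset.prod_pair h]



section SzarekCore

variable {ι : Type*} [Fintype ι] [DecidableEq ι]

def S (a : ι → ℝ) (σ : ι → Bool) : ℝ := ∑ i, a i * sg (σ i)
def ff (a : ι → ℝ) (σ : ι → Bool) : ℝ := |S a σ|
def W (a : ι → ℝ) (A : Finset ι) : ℝ := ∑ σ : ι → Bool, ff a σ * ∏ i ∈ A, sg (σ i)
def R (a : ι → ℝ) (γ : ι → Bool) : ℝ :=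
  ∑ σ : ι → Bool, ff a σ * ff a (fun i => xor (σ i) (γ i))

lemma sum_S_mul (a : ι → ℝ) (γ : ι → Bool) :
    ∑ σ : ι → Bool, S a σ * S a (fun i => xor (σ i) (γ i))
      = (2:ℝ)^(Fintype.card ι) * ∑ i, a i ^ 2 * sg (γ i) := by
  have key : ∀ σ : ι → Bool, S a σ * S a (fun i => xor (σ i) (γ i))
      = ∑ i, ∑ k, (a i * a k * sg (γ k)) * (sg (σ i) * sg (σ k)) := by
    intro σ
    rw [S, S, Finset.sum_mul_sum]
    refine Finset.sum_congr rfl fun i _ => Finset.sum_congr rfl fun k _ => ?_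
    rw [sg_xor]; ring
  calc ∑ σ : ι → Bool, S a σ * S a (fun i => xor (σ i) (γ i))
      = ∑ σ : ι → Bool, ∑ i, ∑ k, (a i * a k * sg (γ k)) * (sg (σ i) * sg (σ k)) :=
        Finset.sum_congr rfl fun σ _ => key σ
    _ = ∑ i, ∑ k, ∑ σ : ι → Bool, (a i * a k * sg (γ k)) * (sg (σ i) * sg (σ k)) := by
        rw [Finset.sum_comm]
        exact Finset.sum_congr rfl fun i _ => Finset.sum_comm
    _ = ∑ i, ∑ k, (a i * a k * sg (γ k)) * ∑ σ : ι → Bool, sg (σ i) * sg (σ k) := by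
        simp_rw [← Finset.mul_sum]
    _ = ∑ i, ∑ k, (a i * a k * sg (γ k)) * (if i = k then (2:ℝ)^(Fintype.card ι) else 0) := by
        simp_rw [two_point]
    _ = ∑ i, (a i * a i * sg (γ i)) * (2:ℝ)^(Fintype.card ι) := by
        refine Finset.sum_congr rfl fun i _ => ?_
        simp [mul_ite, mul_zero, Finset.sum_ite_eq]
    _ = (2:ℝ)^(Fintype.card ι) * ∑ i, a i ^ 2 * sg (γ i) := by
        rw [Finset.mul_sum]
        exact Finset.sum_congr rfl fun i _ => by ring

lemma xor_coord (b c d : Bool) : (xor (xor b c) d = false) ↔ (c = xor b d) := by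
  revert b c d; decide

lemma WW (a : ι → ℝ) (γ : ι → Bool) :
    ∑ A : Finset ι, (W a A)^2 * ∏ i ∈ A, sg (γ i)
      = (2:ℝ)^(Fintype.card ι) * R a γ := by
  have key : ∀ A : Finset ι, (W a A)^2 * ∏ i ∈ A, sg (γ i)
      = ∑ σ : ι → Bool, ∑ τ : ι → Bool, (ff a σ * ff a τ) *
          ∏ i ∈ A, sg (xor (xor (σ i) (τ i)) (γ i)) := by
    intro A
    rw [sq, W, Finset.sum_mul_sum, Finset.sum_mul]
    refine Finset.sum_congr rfl fun σ _ => ?_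
    rw [Finset.sum_mul]
    refine Finset.sum_congr rfl fun τ _ => ?_
    simp_rw [sg_xor]
    rw [Finset.prod_mul_distrib, Finset.prod_mul_distrib]
    ring
  calc ∑ A : Finset ι, (W a A)^2 * ∏ i ∈ A, sg (γ i)
      = ∑ A : Finset ι, ∑ σ : ι → Bool, ∑ τ : ι → Bool, (ff a σ * ff a τ) *
          ∏ i ∈ A, sg (xor (xor (σ i) (τ i)) (γ i)) := Finset.sum_congr rfl fun A _ => key A
    _ = ∑ σ : ι → Bool, ∑ τ : ι → Bool, ∑ A : Finset ι, (ff a σ * ff a τ) *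
          ∏ i ∈ A, sg (xor (xor (σ i) (τ i)) (γ i)) := by
        rw [Finset.sum_comm]
        exact Finset.sum_congr rfl fun σ _ => Finset.sum_comm
    _ = ∑ σ : ι → Bool, ∑ τ : ι → Bool, (ff a σ * ff a τ) *
          (if τ = (fun i => xor (σ i) (γ i)) then (2:ℝ)^(Fintype.card ι) else 0) := by
        refine Finset.sum_congr rfl fun σ _ => Finset.sum_congr rfl fun τ _ => ?_
        rw [← Finset.mul_sum, sum_over_A]
        congr 1
        have : (∀ i, xor (xor (σ i) (τ i)) (γ i) = false) ↔ τ = (fun i => xor (σ i) (γ i)) := by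
          simp_rw [xor_coord]
          exact funext_iff.symm
        simp_rw [this]
    _ = (2:ℝ)^(Fintype.card ι) * R a γ := by
        rw [R, Finset.mul_sum]
        refine Finset.sum_congr rfl fun σ _ => ?_
        simp [mul_ite, mul_zero, Finset.sum_ite_eq']
        try ring

lemma sum_f_sq (a : ι → ℝ) :
    ∑ σ : ι → Bool, (ff a σ)^2 = (2:ℝ)^(Fintype.card ι) * ∑ i, a i ^ 2 := by
  have h := sum_S_mul a (fun _ => false)
  simp only [Bool.xor_false, sg_false, mul_one] at h
  calc ∑ σ : ι → Bool, (ff a σ)^2 = ∑ σ : ι → Bool, S a σ * S a σ := by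
        refine Finset.sum_congr rfl fun σ _ => ?_
        rw [ff, sq_abs, sq]
    _ = (2:ℝ)^(Fintype.card ι) * ∑ i, a i ^ 2 := by
        rw [← h]
        try exact Finset.sum_congr rfl fun σ _ => by norm_num

lemma parseval (a : ι → ℝ) :
    ∑ A : Finset ι, (W a A)^2
      = (2:ℝ)^(Fintype.card ι) * ((2:ℝ)^(Fintype.card ι) * ∑ i, a i ^ 2) := by
  have h := WW a (fun _ => false)
  simp only [sg_false, Finset.prod_const_one, mul_one] at h
  rw [h, R]
  congr 1
  calc ∑ σ : ι → Bool, ff a σ * ff a (fun i => xor (σ i) false)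
      = ∑ σ : ι → Bool, (ff a σ)^2 := by
        refine Finset.sum_congr rfl fun σ _ => ?_
        simp [sq]
    _ = (2:ℝ)^(Fintype.card ι) * ∑ i, a i ^ 2 := sum_f_sq a

lemma W_odd (a : ι → ℝ) (A : Finset ι) (h : ¬ Even A.card) : W a A = 0 := by
  have inv : Function.Involutive (fun σ : ι → Bool => fun i => !(σ i)) := by
    intro σ; funext i; simp
  have hW : W a A = ∑ σ : ι → Bool, ff a (fun i => !(σ i)) * ∏ i ∈ A, sg (!(σ i)) := by
    rw [W, ← Equiv.sum_comp inv.toPerm (fun σ => ff a σ * ∏ i ∈ A, sg (σ i))]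
    simp only [Function.Involutive.coe_toPerm]
  have hf : ∀ σ : ι → Bool, ff a (fun i => !(σ i)) = ff a σ := by
    intro σ
    rw [ff, ff, S, S]
    rw [← abs_neg]
    congr 1
    rw [← Finset.sum_neg_distrib]
    exact Finset.sum_congr rfl fun i _ => by rw [sg_not]; ring
  have hχ : ∀ σ : ι → Bool, (∏ i ∈ A, sg (!(σ i))) = (-1:ℝ)^A.card * ∏ i ∈ A, sg (σ i) := by
    intro σ
    simp_rw [sg_not]
    rw [← Finset.prod_const, ← Finset.prod_mul_distrib]
    exact Finset.prod_congr rfl fun i _ => by ring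
  have : W a A = -(W a A) := by
    conv_lhs => rw [hW]
    rw [W, ← Finset.sum_neg_distrib]
    refine Finset.sum_congr rfl fun σ _ => ?_
    rw [hf, hχ, (Nat.not_even_iff_odd.1 h).neg_one_pow]
    ring
  linarith

noncomputable def w (ρ : ℝ) : Bool → ℝ
  | false => (1+ρ)/2
  | true => (1-ρ)/2

@[simp] lemma w_false (ρ : ℝ) : w ρ false = (1+ρ)/2 := rfl
@[simp] lemma w_true (ρ : ℝ) : w ρ true = (1-ρ)/2 := rfl

lemma sum_w_chi (ρ : ℝ) (A : Finset ι) :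
    ∑ γ : ι → Bool, (∏ i, w ρ (γ i)) * ∏ i ∈ A, sg (γ i) = ρ ^ A.card := by
  have key : ∀ γ : ι → Bool, (∏ i, w ρ (γ i)) * ∏ i ∈ A, sg (γ i)
      = ∏ i, (w ρ (γ i) * (if i ∈ A then sg (γ i) else 1)) := by
    intro γ
    rw [prod_mem_sg, Finset.prod_mul_distrib]
  simp_rw [key]
  rw [sum_pi_bool_prod (fun i b => w ρ b * (if i ∈ A then sg b else 1))]
  have hfac : ∀ i : ι, (∑ b : Bool, w ρ b * (if i ∈ A then sg b else 1))
      = if i ∈ A then ρ else 1 := by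
    intro i
    by_cases h : i ∈ A <;> simp [h, Fintype.sum_bool] <;> ring
  simp_rw [hfac]
  rw [Finset.prod_ite_mem, Finset.univ_inter, Finset.prod_const]

lemma w_prod_nonneg {ρ : ℝ} (h0 : 0 ≤ ρ) (h1 : ρ ≤ 1) (γ : ι → Bool) :
    0 ≤ ∏ i, w ρ (γ i) := by
  apply Finset.prod_nonneg
  intro i _
  cases γ i <;> simp <;> linarith

theorem szarek_sq (a : ι → ℝ) :
    ((2:ℝ)^(Fintype.card ι))^2 * (∑ i, a i^2) ≤ 2 * (∑ σ : ι → Bool, |S a σ|)^2 := by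
  set K : ℝ := (2:ℝ)^(Fintype.card ι) with hK
  set T : ℝ := ∑ i, a i ^ 2 with hT
  have hKpos : 0 < K := by positivity
  have hTnn : 0 ≤ T := by positivity
  have hW0 : W a ∅ = ∑ σ : ι → Bool, |S a σ| := by
    rw [W]; simp [ff]
  set W0 : ℝ := W a ∅ with hW0d
  -- main inequality for each ρ ∈ [0,1)
  have main : ∀ ρ : ℝ, 0 ≤ ρ → ρ < 1 → ρ * (K^2 * T) ≤ (1+ρ) * W0^2 := by
    intro ρ h0 h1
    have h1' : ρ ≤ 1 := le_of_lt h1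
    set G : ℝ := ∑ γ : ι → Bool, (∏ i, w ρ (γ i)) * R a γ with hG
    -- lower bound for G
    have hlow : ρ * (K * T) ≤ G := by
      have hRγ : ∀ γ : ι → Bool, K * ∑ i, a i ^ 2 * sg (γ i) ≤ R a γ := by
        intro γ
        rw [← sum_S_mul a γ, R]
        apply Finset.sum_le_sum
        intro σ _
        calc S a σ * S a (fun i => xor (σ i) (γ i))
            ≤ |S a σ * S a (fun i => xor (σ i) (γ i))| := le_abs_self _
          _ = ff a σ * ff a (fun i => xor (σ i) (γ i)) := by rw [abs_mul]; rfl
      have step1 : ∑ γ : ι → Bool, (∏ i, w ρ (γ i)) * (K * ∑ i, a i ^ 2 * sg (γ i)) ≤ G := by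
        apply Finset.sum_le_sum
        intro γ _
        exact mul_le_mul_of_nonneg_left (hRγ γ) (w_prod_nonneg h0 h1' γ)
      refine le_trans (le_of_eq ?_) step1
      calc ρ * (K * T)
          = K * ∑ i, a i ^ 2 * ρ := by
            rw [hT, ← Finset.sum_mul]; ring
        _ = K * ∑ i, a i ^ 2 * ∑ γ : ι → Bool, (∏ j, w ρ (γ j)) * sg (γ i) := by
            congr 1
            refine Finset.sum_congr rfl fun i _ => ?_
            congr 1
            have := sum_w_chi ρ ({i} : Finset ι)
            simp only [Finset.prod_singleton, Finset.card_singleton, pow_one] at this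
            exact this.symm
        _ = ∑ γ : ι → Bool, (∏ i, w ρ (γ i)) * (K * ∑ i, a i ^ 2 * sg (γ i)) := by
            rw [Finset.mul_sum]
            simp_rw [Finset.mul_sum]
            rw [Finset.sum_comm]
            refine Finset.sum_congr rfl fun γ _ => ?_
            refine Finset.sum_congr rfl fun i _ => by ring
      -- upper bound for K * G
    have hup : K * G ≤ W0^2 + ρ^2 * (K * (K * T) - W0^2) := by
      have hKG : K * G = ∑ A : Finset ι, (W a A)^2 * ρ ^ A.card := by
        calc K * G = ∑ γ : ι → Bool, (∏ i, w ρ (γ i)) * (K * R a γ) := by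
              rw [hG, Finset.mul_sum]
              exact Finset.sum_congr rfl fun γ _ => by ring
          _ = ∑ γ : ι → Bool, (∏ i, w ρ (γ i)) *
                (∑ A : Finset ι, (W a A)^2 * ∏ i ∈ A, sg (γ i)) := by
              simp_rw [WW, hK]
          _ = ∑ A : Finset ι, (W a A)^2 *
                (∑ γ : ι → Bool, (∏ i, w ρ (γ i)) * ∏ i ∈ A, sg (γ i)) := by
              simp_rw [Finset.mul_sum]
              rw [Finset.sum_comm]
              refine Finset.sum_congr rfl fun A _ => Finset.sum_congr rfl fun γ _ => by ring
          _ = ∑ A : Finset ι, (W a A)^2 * ρ ^ A.card := by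
              simp_rw [sum_w_chi]
      rw [hKG]
      have hrest : ∑ A ∈ Finset.univ.erase ∅, (W a A)^2 * ρ ^ A.card
          ≤ ρ^2 * (K * (K * T) - W0^2) := by
        have hsub : ρ^2 * (K * (K * T) - W0^2)
            = ∑ A ∈ Finset.univ.erase ∅, ρ^2 * (W a A)^2 := by
          rw [← Finset.mul_sum]
          congr 1
          rw [Finset.sum_erase_eq_sub (Finset.mem_univ ∅)]
          rw [parseval a]
        rw [hsub]
        apply Finset.sum_le_sum
        intro A hA
        have hAne : A ≠ ∅ := (Finset.mem_erase.1 hA).1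
        by_cases hev : Even A.card
        · have hcard : 2 ≤ A.card := by
            rcases Finset.nonempty_iff_ne_empty.2 hAne with ⟨x, hx⟩
            have h1c : 1 ≤ A.card := Finset.card_pos.2 ⟨x, hx⟩
            rcases hev with ⟨r, hr⟩
            omega
          have : ρ ^ A.card ≤ ρ^2 := pow_le_pow_of_le_one h0 h1' hcard
          calc (W a A)^2 * ρ ^ A.card ≤ (W a A)^2 * ρ^2 :=
                mul_le_mul_of_nonneg_left this (sq_nonneg _)
            _ = ρ^2 * (W a A)^2 := by ring
        · rw [W_odd a A hev]
          simp [sq_nonneg]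
      calc ∑ A : Finset ι, (W a A)^2 * ρ ^ A.card
          = (W a ∅)^2 * ρ ^ (∅ : Finset ι).card
              + ∑ A ∈ Finset.univ.erase ∅, (W a A)^2 * ρ ^ A.card :=
            (Finset.add_sum_erase _ (fun A => (W a A)^2 * ρ ^ A.card) (Finset.mem_univ ∅)).symm
        _ ≤ W0^2 + ρ^2 * (K * (K * T) - W0^2) := by
            simp only [Finset.card_empty, pow_zero, mul_one, ← hW0d]
            linarith [hrest]
    -- combine
    have hcomb : ρ * (K^2 * T) ≤ W0^2 + ρ^2 * (K^2 * T - W0^2) := by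
      have := mul_le_mul_of_nonneg_left hlow (le_of_lt hKpos)
      calc ρ * (K^2*T) = K * (ρ * (K * T)) := by ring
        _ ≤ K * G := by linarith [this]
        _ ≤ W0^2 + ρ^2 * (K * (K * T) - W0^2) := hup
        _ = W0^2 + ρ^2 * (K^2 * T - W0^2) := by ring
    have h2 : (1-ρ) * (ρ * (K^2*T)) ≤ (1-ρ) * ((1+ρ) * W0^2) := by nlinarith [hcomb]
    exact le_of_mul_le_mul_left h2 (by linarith)
  -- take the limit ρ → 1
  by_contra hc
  push_neg at hc
  rw [← hW0] at hc
  have hc' : 2 * W0^2 < K^2 * T := hc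
  have hKT : 0 < K^2 * T := lt_of_le_of_lt (by positivity) hc'
  set ρ := (2*W0^2 + K^2*T) / (2*(K^2*T)) with hρ
  have h0 : 0 ≤ ρ := by
    apply div_nonneg
    · nlinarith [sq_nonneg W0]
    · linarith
  have h1 : ρ < 1 := by
    rw [hρ, div_lt_one (by linarith)]
    linarith
  have hm := main ρ h0 h1
  have hρKT : ρ * (K^2*T) = (2*W0^2 + K^2*T)/2 := by
    rw [hρ, div_mul_eq_mul_div, div_eq_div_iff (ne_of_gt (by linarith)) (by norm_num)]
    ring
  rw [hρKT] at hm
  nlinarith [sq_nonneg W0, hm]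

theorem szarek (a : ι → ℝ) :
    (2:ℝ)^(Fintype.card ι) * Real.sqrt (∑ i, a i ^ 2)
      ≤ Real.sqrt 2 * ∑ σ : ι → Bool, |∑ i, a i * sg (σ i)| := by
  have h := szarek_sq a
  set K : ℝ := (2:ℝ)^(Fintype.card ι) with hK
  set W0 : ℝ := ∑ σ : ι → Bool, |S a σ| with hW0
  have hW0nn : 0 ≤ W0 := Finset.sum_nonneg fun σ _ => abs_nonneg _
  have hL : K * Real.sqrt (∑ i, a i ^ 2) = Real.sqrt (K^2 * ∑ i, a i^2) := by
    rw [Real.sqrt_mul (by positivity), Real.sqrt_sq (by positivity)]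
  have hR : Real.sqrt 2 * W0 = Real.sqrt (2 * W0^2) := by
    rw [Real.sqrt_mul (by norm_num), Real.sqrt_sq hW0nn]
  have : K * Real.sqrt (∑ i, a i ^ 2) ≤ Real.sqrt 2 * W0 := by
    rw [hL, hR]
    exact Real.sqrt_le_sqrt h
  calc (2:ℝ)^(Fintype.card ι) * Real.sqrt (∑ i, a i ^ 2)
      ≤ Real.sqrt 2 * W0 := this
    _ = Real.sqrt 2 * ∑ σ : ι → Bool, |∑ i, a i * sg (σ i)| := rfl

end SzarekCore

section Vector

variable {ι : Type*} [Fintype ι] [DecidableEq ι] {J : Type*} [Fintype J]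

lemma minkowski {κ : Type*} [Fintype κ] (c : κ → J → ℝ) :
    Real.sqrt (∑ j, (∑ k, c k j)^2) ≤ ∑ k, Real.sqrt (∑ j, (c k j)^2) := by
  let v : κ → EuclideanSpace ℝ J := fun k => (WithLp.equiv 2 (J → ℝ)).symm (c k)
  have hnorm : ∀ k, ‖v k‖ = Real.sqrt (∑ j, (c k j)^2) := by
    intro k
    rw [EuclideanSpace.norm_eq]
    congr 1
    refine Finset.sum_congr rfl fun j _ => ?_
    simp only [v, WithLp.equiv_symm_apply, PiLp.toLp_apply, Real.norm_eq_abs, sq_abs]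
  have happ : ∀ j, (∑ k, v k) j = ∑ k, c k j := by
    intro j
    rw [WithLp.ofLp_sum, Finset.sum_apply]
    refine Finset.sum_congr rfl fun k _ => ?_
    simp only [v, WithLp.equiv_symm_apply, PiLp.toLp_apply]
  have hsum : ‖∑ k, v k‖ = Real.sqrt (∑ j, (∑ k, c k j)^2) := by
    rw [EuclideanSpace.norm_eq]
    congr 1
    refine Finset.sum_congr rfl fun j _ => ?_
    rw [happ j, Real.norm_eq_abs, sq_abs]
  calc Real.sqrt (∑ j, (∑ k, c k j)^2) = ‖∑ k, v k‖ := hsum.symm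
    _ ≤ ∑ k, ‖v k‖ := norm_sum_le _ _
    _ = ∑ k, Real.sqrt (∑ j, (c k j)^2) := Finset.sum_congr rfl fun k _ => hnorm k

lemma sqrt_sum_sq_mono (u v : J → ℝ) (h : ∀ j, 0 ≤ u j) (h2 : ∀ j, u j ≤ v j) :
    Real.sqrt (∑ j, (u j)^2) ≤ Real.sqrt (∑ j, (v j)^2) :=
  Real.sqrt_le_sqrt (Finset.sum_le_sum fun j _ => pow_le_pow_left₀ (h j) (h2 j) 2)

lemma sqrt_scalar_pull (c : ℝ) (hc : 0 ≤ c) (u : J → ℝ) :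
    Real.sqrt (∑ j, (c * u j)^2) = c * Real.sqrt (∑ j, (u j)^2) := by
  have : ∑ j, (c * u j)^2 = c^2 * ∑ j, (u j)^2 := by
    rw [Finset.mul_sum]
    exact Finset.sum_congr rfl fun j _ => by ring
  rw [this, Real.sqrt_mul (by positivity), Real.sqrt_sq hc]

theorem khinchine_vec (a : ι → J → ℝ) :
    (2:ℝ)^(Fintype.card ι) * Real.sqrt (∑ j, ∑ i, (a i j)^2)
      ≤ Real.sqrt 2 * ∑ σ : ι → Bool,
          Real.sqrt (∑ j, (∑ i, a i j * sg (σ i))^2) := by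
  set n := Fintype.card ι with hn
  have per : ∀ j : J, (2:ℝ)^n * Real.sqrt (∑ i, (a i j)^2)
      ≤ Real.sqrt 2 * ∑ σ : ι → Bool, |∑ i, a i j * sg (σ i)| :=
    fun j => szarek (fun i => a i j)
  calc (2:ℝ)^n * Real.sqrt (∑ j, ∑ i, (a i j)^2)
      = Real.sqrt (∑ j, ((2:ℝ)^n * Real.sqrt (∑ i, (a i j)^2))^2) := by
        rw [sqrt_scalar_pull ((2:ℝ)^n) (by positivity)]
        congr 2
        exact Finset.sum_congr rfl fun j _ => (Real.sq_sqrt (by positivity)).symm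
    _ ≤ Real.sqrt (∑ j, (Real.sqrt 2 * ∑ σ : ι → Bool, |∑ i, a i j * sg (σ i)|)^2) := by
        apply sqrt_sum_sq_mono
        · intro j; positivity
        · exact per
    _ = Real.sqrt 2 * Real.sqrt (∑ j, (∑ σ : ι → Bool, |∑ i, a i j * sg (σ i)|)^2) := by
        rw [sqrt_scalar_pull (Real.sqrt 2) (Real.sqrt_nonneg 2)]
    _ ≤ Real.sqrt 2 * ∑ σ : ι → Bool, Real.sqrt (∑ j, (|∑ i, a i j * sg (σ i)|)^2) := by
        apply mul_le_mul_of_nonneg_left _ (Real.sqrt_nonneg 2)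
        exact minkowski _
    _ = Real.sqrt 2 * ∑ σ : ι → Bool, Real.sqrt (∑ j, (∑ i, a i j * sg (σ i))^2) := by
        congr 1
        refine Finset.sum_congr rfl fun σ _ => ?_
        congr 1
        exact Finset.sum_congr rfl fun j _ => sq_abs _

end Vector


section Iterated

variable {ι : Type*} [Fintype ι] [DecidableEq ι]

lemma sum_pi_succ {α : Type*} [Fintype α] {ℓ : ℕ} (g : (Fin (ℓ+1) → α) → ℝ) :
    ∑ j : Fin (ℓ+1) → α, g j = ∑ i : α, ∑ j' : Fin ℓ → α, g (Fin.cons i j') := by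
  rw [← Equiv.sum_comp (Fin.consEquiv (fun _ : Fin (ℓ+1) => α)) g, Fintype.sum_prod_type]
  rfl

theorem khinchine_iter (ℓ : ℕ) (c : (Fin ℓ → ι) → ℝ) :
    (2:ℝ)^(ℓ * Fintype.card ι) * Real.sqrt (∑ j : Fin ℓ → ι, (c j)^2)
      ≤ (Real.sqrt 2)^ℓ * ∑ σ : Fin ℓ → (ι → Bool),
          |∑ j : Fin ℓ → ι, c j * ∏ t, sg (σ t (j t))| := by
  induction ℓ with
  | zero =>
      simp [Real.sqrt_sq_eq_abs]
  | succ ℓ ih =>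
      set n := Fintype.card ι with hn
      have hsum1 : ∑ j : Fin (ℓ+1) → ι, (c j)^2
          = ∑ j' : Fin ℓ → ι, ∑ i : ι, (c (Fin.cons i j'))^2 := by
        rw [sum_pi_succ (fun j => (c j)^2), Finset.sum_comm]
      have stepA := khinchine_vec (fun i (j' : Fin ℓ → ι) => c (Fin.cons i j'))
      have stepB : ∀ σ₀ : ι → Bool,
          (2:ℝ)^(ℓ*n) * Real.sqrt (∑ j' : Fin ℓ → ι, (∑ i, c (Fin.cons i j') * sg (σ₀ i))^2)
            ≤ (Real.sqrt 2)^ℓ * ∑ σ' : Fin ℓ → (ι → Bool),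
                |∑ j' : Fin ℓ → ι, (∑ i, c (Fin.cons i j') * sg (σ₀ i)) * ∏ t, sg (σ' t (j' t))| :=
        fun σ₀ => ih (fun j' => ∑ i, c (Fin.cons i j') * sg (σ₀ i))
      have inner : ∀ (σ₀ : ι → Bool) (σ' : Fin ℓ → (ι → Bool)),
          ∑ j' : Fin ℓ → ι, (∑ i, c (Fin.cons i j') * sg (σ₀ i)) * ∏ t, sg (σ' t (j' t))
            = ∑ j : Fin (ℓ+1) → ι, c j * ∏ t, sg ((Fin.cons σ₀ σ' : Fin (ℓ+1) → ι → Bool) t (j t)) := by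
        intro σ₀ σ'
        rw [sum_pi_succ (fun j => c j * ∏ t, sg ((Fin.cons σ₀ σ' : Fin (ℓ+1) → ι → Bool) t (j t)))]
        rw [Finset.sum_comm]
        refine Finset.sum_congr rfl fun j' _ => ?_
        rw [Finset.sum_mul]
        refine Finset.sum_congr rfl fun i _ => ?_
        rw [Fin.prod_univ_succ]
        simp only [Fin.cons_zero, Fin.cons_succ]
        ring
      calc (2:ℝ)^((ℓ+1) * n) * Real.sqrt (∑ j : Fin (ℓ+1) → ι, (c j)^2)
          = (2:ℝ)^(ℓ*n) * ((2:ℝ)^n *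
              Real.sqrt (∑ j' : Fin ℓ → ι, ∑ i : ι, (c (Fin.cons i j'))^2)) := by
            rw [hsum1, show (ℓ+1)*n = ℓ*n + n by ring, pow_add, mul_assoc]
        _ ≤ (2:ℝ)^(ℓ*n) * (Real.sqrt 2 * ∑ σ₀ : ι → Bool,
              Real.sqrt (∑ j' : Fin ℓ → ι, (∑ i, c (Fin.cons i j') * sg (σ₀ i))^2)) := by
            apply mul_le_mul_of_nonneg_left _ (by positivity)
            exact stepA
        _ = Real.sqrt 2 * ∑ σ₀ : ι → Bool, (2:ℝ)^(ℓ*n) *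
              Real.sqrt (∑ j' : Fin ℓ → ι, (∑ i, c (Fin.cons i j') * sg (σ₀ i))^2) := by
            rw [← Finset.mul_sum]
            ring
        _ ≤ Real.sqrt 2 * ∑ σ₀ : ι → Bool, ((Real.sqrt 2)^ℓ * ∑ σ' : Fin ℓ → (ι → Bool),
              |∑ j' : Fin ℓ → ι, (∑ i, c (Fin.cons i j') * sg (σ₀ i)) * ∏ t, sg (σ' t (j' t))|) := by
            apply mul_le_mul_of_nonneg_left _ (Real.sqrt_nonneg 2)
            exact Finset.sum_le_sum fun σ₀ _ => stepB σ₀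
        _ = (Real.sqrt 2)^(ℓ+1) * ∑ σ : Fin (ℓ+1) → (ι → Bool),
              |∑ j : Fin (ℓ+1) → ι, c j * ∏ t, sg (σ t (j t))| := by
            rw [sum_pi_succ (fun σ : Fin (ℓ+1) → (ι → Bool) => |∑ j : Fin (ℓ+1) → ι, c j * ∏ t, sg (σ t (j t))|)]
            simp_rw [← inner]
            rw [← Finset.mul_sum, pow_succ]
            ring

end Iterated

section Membership

variable {m N : ℕ} (U : ContinuousMultilinearMap ℝ (fun _ : Fin (m + 2) => (Fin N → ℝ)) ℝ)

lemma expand (x : Fin (m+2) → (Fin N → ℝ)) :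
    U x = ∑ d : Fin (m+2) → Fin N, (∏ i, x i (d i)) * U (fun i => Pi.single (d i) 1) := by
  have hx : x = fun i => ∑ k : Fin N, x i k • (Pi.single k 1 : Fin N → ℝ) := by
    funext i l
    rw [Finset.sum_apply]
    simp [Pi.single_apply]
  calc U x = U (fun i => ∑ k : Fin N, x i k • (Pi.single k 1 : Fin N → ℝ)) := by rw [← hx]
    _ = ∑ d : Fin (m+2) → Fin N, U (fun i => x i (d i) • (Pi.single (d i) 1 : Fin N → ℝ)) := by
        exact U.toMultilinearMap.map_sum (fun i k => x i k • (Pi.single k 1 : Fin N → ℝ))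
    _ = ∑ d : Fin (m+2) → Fin N, (∏ i, x i (d i)) * U (fun i => Pi.single (d i) 1) := by
        refine Finset.sum_congr rfl fun d _ => ?_
        have := U.toMultilinearMap.map_smul_univ (fun i => x i (d i))
          (fun i => (Pi.single (d i) 1 : Fin N → ℝ))
        simpa using this

lemma apply_signs (j₁ : Fin N) (σ : Fin (m+1) → (Fin N → Bool)) :
    ∑ j : Fin (m+1) → Fin N,
        (U (Fin.cons (Pi.single j₁ 1) (fun i => Pi.single (j i) 1))) * ∏ t, sg (σ t (j t))
      = U (Fin.cons (Pi.single j₁ 1) (fun t k => sg (σ t k))) := by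
  rw [expand U (Fin.cons (Pi.single j₁ 1) (fun t k => sg (σ t k)))]
  rw [sum_pi_succ (fun d : Fin (m+2) → Fin N =>
    (∏ i, (Fin.cons (Pi.single j₁ 1) (fun t k => sg (σ t k)) : Fin (m+2) → Fin N → ℝ) i (d i))
      * U (fun i => Pi.single (d i) 1))]
  have hterm : ∀ (d₀ : Fin N) (j : Fin (m+1) → Fin N),
      (∏ i, (Fin.cons (Pi.single j₁ 1) (fun t k => sg (σ t k)) : Fin (m+2) → Fin N → ℝ) i
          ((Fin.cons d₀ j : Fin (m+2) → Fin N) i)) * U (fun i => Pi.single ((Fin.cons d₀ j : Fin (m+2) → Fin N) i) 1)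
        = (if d₀ = j₁ then (1:ℝ) else 0) * ((∏ t, sg (σ t (j t)))
            * U (Fin.cons (Pi.single j₁ 1) (fun i => Pi.single (j i) 1))) := by
    intro d₀ j
    rw [Fin.prod_univ_succ]
    simp only [Fin.cons_zero, Fin.cons_succ]
    by_cases h : d₀ = j₁
    · subst h
      have harg : (fun i => (Pi.single ((Fin.cons d₀ j : Fin (m+2) → Fin N) i) 1 : Fin N → ℝ))
          = (Fin.cons (Pi.single d₀ 1) (fun t => Pi.single (j t) 1) : Fin (m+2) → Fin N → ℝ) := by
        funext i
        induction i using Fin.cases with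
        | zero => simp
        | succ t => simp
      rw [harg]
      simp [Pi.single_apply]
    · simp [Pi.single_apply, h]
  symm
  calc ∑ d₀ : Fin N, ∑ j : Fin (m+1) → Fin N,
        (∏ i, (Fin.cons (Pi.single j₁ 1) (fun t k => sg (σ t k)) : Fin (m+2) → Fin N → ℝ) i
          ((Fin.cons d₀ j : Fin (m+2) → Fin N) i)) * U (fun i => Pi.single ((Fin.cons d₀ j : Fin (m+2) → Fin N) i) 1)
      = ∑ d₀ : Fin N, (if d₀ = j₁ then (1:ℝ) else 0) * ∑ j : Fin (m+1) → Fin N,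
          ((∏ t, sg (σ t (j t)))
            * U (Fin.cons (Pi.single j₁ 1) (fun i => Pi.single (j i) 1))) := by
        refine Finset.sum_congr rfl fun d₀ _ => ?_
        rw [Finset.mul_sum]
        exact Finset.sum_congr rfl fun j _ => hterm d₀ j
    _ = ∑ j : Fin (m+1) → Fin N,
          (U (Fin.cons (Pi.single j₁ 1) (fun i => Pi.single (j i) 1))) * ∏ t, sg (σ t (j t)) := by
        simp only [ite_mul, one_mul, zero_mul, Finset.sum_ite_eq', Finset.mem_univ, if_true]
        exact Finset.sum_congr rfl fun j _ => by ring
  -- note: calc's goal orientation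

lemma sum_abs_le (y : Fin (m+1) → (Fin N → ℝ)) (hy : ∀ t, ‖y t‖ ≤ 1) :
    ∑ j₁ : Fin N, |U (Fin.cons (Pi.single j₁ 1) y)| ≤ ‖U‖ := by
  classical
  set dv : Fin N → ℝ := fun k => if 0 ≤ U (Fin.cons (Pi.single k 1) y) then 1 else -1 with hdv
  have habs : ∀ k : Fin N, |U (Fin.cons (Pi.single k 1) y)|
      = dv k * U (Fin.cons (Pi.single k 1) y) := by
    intro k
    by_cases h : 0 ≤ U (Fin.cons (Pi.single k 1) y)
    · simp [hdv, h, abs_of_nonneg]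
    · push_neg at h
      simp [hdv, not_le.2 h, abs_of_neg h]
  have hdvnorm : ‖dv‖ ≤ 1 := by
    rw [pi_norm_le_iff_of_nonneg zero_le_one]
    intro k
    rw [Real.norm_eq_abs]
    by_cases h : 0 ≤ U (Fin.cons (Pi.single k 1) y) <;> simp [hdv, h]
  have hcons : ∀ v : Fin N → ℝ, Function.update (Fin.cons dv y : Fin (m+2) → Fin N → ℝ) 0 v
      = Fin.cons v y := by
    intro v
    funext i
    induction i using Fin.cases with
    | zero => simp
    | succ t => rw [Function.update_of_ne (Fin.succ_ne_zero t)]; simp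
  have hdvsum : dv = ∑ k : Fin N, dv k • (Pi.single k 1 : Fin N → ℝ) := by
    funext l
    rw [Finset.sum_apply]
    simp [Pi.single_apply]
  set L : (Fin N → ℝ) →ₗ[ℝ] ℝ :=
    U.toMultilinearMap.toLinearMap (Fin.cons dv y : Fin (m+2) → Fin N → ℝ) 0 with hLdef
  have hLapp : ∀ v : Fin N → ℝ, L v = U (Fin.cons v y) := by
    intro v
    rw [hLdef]
    show U (Function.update (Fin.cons dv y : Fin (m+2) → Fin N → ℝ) 0 v) = U (Fin.cons v y)
    rw [hcons v]
  have hlin : U (Fin.cons dv y) = ∑ k : Fin N, dv k * U (Fin.cons (Pi.single k 1) y) := by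
    calc U (Fin.cons dv y) = L dv := (hLapp dv).symm
      _ = L (∑ k : Fin N, dv k • (Pi.single k 1 : Fin N → ℝ)) := by rw [← hdvsum]
      _ = ∑ k : Fin N, dv k • L (Pi.single k 1 : Fin N → ℝ) := by
          rw [map_sum]
          exact Finset.sum_congr rfl fun k _ => by rw [map_smul]
      _ = ∑ k : Fin N, dv k * U (Fin.cons (Pi.single k 1) y) := by
          exact Finset.sum_congr rfl fun k _ => by rw [hLapp, smul_eq_mul]
  calc ∑ j₁ : Fin N, |U (Fin.cons (Pi.single j₁ 1) y)|
      = U (Fin.cons dv y) := by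
        rw [hlin]
        exact Finset.sum_congr rfl fun k _ => habs k
    _ ≤ |U (Fin.cons dv y)| := le_abs_self _
    _ ≤ ‖U‖ * ∏ i, ‖(Fin.cons dv y : Fin (m+2) → Fin N → ℝ) i‖ := by
        have := U.le_opNorm (Fin.cons dv y)
        simpa using this
    _ ≤ ‖U‖ * 1 := by
        apply mul_le_mul_of_nonneg_left _ (norm_nonneg U)
        apply Finset.prod_le_one
        · intro i _; exact norm_nonneg _
        · intro i _
          induction i using Fin.cases with
          | zero => simpa using hdvnorm
          | succ t => simpa using hy t
    _ = ‖U‖ := mul_one _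

theorem membership :
    ∑ j₁ : Fin N, Real.sqrt (∑ j : Fin (m + 1) → Fin N,
        |U (Fin.cons (Pi.single j₁ 1) (fun i => Pi.single (j i) 1))| ^ 2)
      ≤ (Real.sqrt 2)^(m+1) * ‖U‖ := by
  classical
  simp_rw [sq_abs]
  set KK : ℝ := (2:ℝ)^((m+1) * N) with hKK
  have hKKpos : 0 < KK := by positivity
  have per : ∀ j₁ : Fin N,
      KK * Real.sqrt (∑ j : Fin (m+1) → Fin N,
          (U (Fin.cons (Pi.single j₁ 1) (fun i => Pi.single (j i) 1)))^2)
        ≤ (Real.sqrt 2)^(m+1) * ∑ σ : Fin (m+1) → (Fin N → Bool),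
            |U (Fin.cons (Pi.single j₁ 1) (fun t k => sg (σ t k)))| := by
    intro j₁
    have h := khinchine_iter (m+1)
      (fun j : Fin (m+1) → Fin N => U (Fin.cons (Pi.single j₁ 1) (fun i => Pi.single (j i) 1)))
    rw [Fintype.card_fin] at h
    refine le_trans (le_of_eq (by rw [hKK])) (le_trans h (le_of_eq ?_))
    congr 1
    exact Finset.sum_congr rfl fun σ _ => by rw [apply_signs U j₁ σ]
  have hcard : ∑ σ : Fin (m+1) → (Fin N → Bool), ‖U‖ = KK * ‖U‖ := by
    rw [Finset.sum_const, nsmul_eq_mul]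
    congr 1
    rw [Finset.card_univ, Fintype.card_fun, Fintype.card_fun, Fintype.card_bool,
      Fintype.card_fin, Fintype.card_fin, hKK]
    push_cast
    rw [← pow_mul, Nat.mul_comm]
  have key : KK * ∑ j₁ : Fin N, Real.sqrt (∑ j : Fin (m+1) → Fin N,
      (U (Fin.cons (Pi.single j₁ 1) (fun i => Pi.single (j i) 1)))^2)
      ≤ KK * ((Real.sqrt 2)^(m+1) * ‖U‖) := by
    calc KK * ∑ j₁ : Fin N, Real.sqrt (∑ j : Fin (m+1) → Fin N,
        (U (Fin.cons (Pi.single j₁ 1) (fun i => Pi.single (j i) 1)))^2)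
        = ∑ j₁ : Fin N, KK * Real.sqrt (∑ j : Fin (m+1) → Fin N,
            (U (Fin.cons (Pi.single j₁ 1) (fun i => Pi.single (j i) 1)))^2) := Finset.mul_sum _ _ _
      _ ≤ ∑ j₁ : Fin N, (Real.sqrt 2)^(m+1) * ∑ σ : Fin (m+1) → (Fin N → Bool),
            |U (Fin.cons (Pi.single j₁ 1) (fun t k => sg (σ t k)))| :=
          Finset.sum_le_sum fun j₁ _ => per j₁
      _ = (Real.sqrt 2)^(m+1) * ∑ σ : Fin (m+1) → (Fin N → Bool), ∑ j₁ : Fin N,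
            |U (Fin.cons (Pi.single j₁ 1) (fun t k => sg (σ t k)))| := by
          rw [← Finset.mul_sum, Finset.sum_comm]
      _ ≤ (Real.sqrt 2)^(m+1) * ∑ σ : Fin (m+1) → (Fin N → Bool), ‖U‖ := by
          apply mul_le_mul_of_nonneg_left _ (by positivity)
          refine Finset.sum_le_sum fun σ _ => ?_
          apply sum_abs_le U (fun t k => sg (σ t k))
          intro t
          rw [pi_norm_le_iff_of_nonneg zero_le_one]
          intro k
          rw [Real.norm_eq_abs, abs_sg]
      _ = KK * ((Real.sqrt 2)^(m+1) * ‖U‖) := by rw [hcard]; ring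
  exact le_of_mul_le_mul_left key hKKpos

end Membership

section LowerBound

lemma sum_pi_prod {ι κ : Type*} [Fintype ι] [DecidableEq ι] [Fintype κ] (F : ι → κ → ℝ) :
    ∑ σ : ι → κ, ∏ i, F i (σ i) = ∏ i, ∑ b : κ, F i b := by
  rw [Finset.prod_univ_sum (fun _ => (univ : Finset κ)) F, Fintype.piFinset_univ]

variable (m : ℕ)

def NN : ℕ := 2^(m+1)

lemma NN_pos : 0 < NN m := by unfold NN; positivity

noncomputable def EE : (Fin (m+1) → Bool) ≃ Fin (NN m) :=
  Fintype.equivFinOfCardEq (by simp [Fintype.card_fun, NN])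

def i0 : Fin (NN m) := ⟨0, NN_pos m⟩
def i1 : Fin (NN m) := ⟨1, by have := Nat.one_lt_two_pow (n := m+1) (by omega); simpa [NN] using this⟩

lemma i0_ne_i1 : i0 m ≠ i1 m := by
  simp [i0, i1, Fin.ext_iff]

noncomputable def Uex : ContinuousMultilinearMap ℝ (fun _ : Fin (m + 2) => (Fin (NN m) → ℝ)) ℝ :=
  ∑ b : Fin (m+1) → Bool,
    (ContinuousMultilinearMap.mkPiAlgebra ℝ (Fin (m+2)) ℝ).compContinuousLinearMap
      (Fin.cons (ContinuousLinearMap.proj (EE m b))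
        (fun t => ContinuousLinearMap.proj (R := ℝ) (φ := fun _ : Fin (NN m) => ℝ) (i0 m)
          + sg (b t) • ContinuousLinearMap.proj (i1 m)))

lemma Uex_apply (x : Fin (m+2) → (Fin (NN m) → ℝ)) :
    Uex m x = ∑ b : Fin (m+1) → Bool,
      (x 0 (EE m b)) * ∏ t : Fin (m+1), (x t.succ (i0 m) + sg (b t) * x t.succ (i1 m)) := by
  rw [Uex, ContinuousMultilinearMap.sum_apply]
  refine Finset.sum_congr rfl fun b _ => ?_
  rw [ContinuousMultilinearMap.compContinuousLinearMap_apply,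
    ContinuousMultilinearMap.mkPiAlgebra_apply, Fin.prod_univ_succ]
  simp [Fin.cons_zero, Fin.cons_succ]

lemma Uex_coef (j₁ : Fin (NN m)) (j : Fin (m+1) → Fin (NN m)) :
    Uex m (Fin.cons (Pi.single j₁ 1) (fun i => Pi.single (j i) 1))
      = ∏ t : Fin (m+1), ((Pi.single (j t) (1:ℝ) : Fin (NN m) → ℝ) (i0 m)
          + sg ((EE m).symm j₁ t) * (Pi.single (j t) (1:ℝ) : Fin (NN m) → ℝ) (i1 m)) := by
  rw [Uex_apply]
  simp only [Fin.cons_zero, Fin.cons_succ]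
  have hsingle : ∀ b : Fin (m+1) → Bool, (Pi.single j₁ (1:ℝ) : Fin (NN m) → ℝ) (EE m b)
      = if b = (EE m).symm j₁ then 1 else 0 := by
    intro b
    rw [Pi.single_apply]
    by_cases hb : b = (EE m).symm j₁
    · rw [if_pos hb, if_pos (by rw [hb, Equiv.apply_symm_apply])]
    · rw [if_neg hb, if_neg (fun hh => hb (by rw [← hh, Equiv.symm_apply_apply]))]
  simp_rw [hsingle, ite_mul, one_mul, zero_mul, Finset.sum_ite_eq', Finset.mem_univ, if_true]

lemma coef_sq (j₁ : Fin (NN m)) (j : Fin (m+1) → Fin (NN m)) :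
    (Uex m (Fin.cons (Pi.single j₁ 1) (fun i => Pi.single (j i) 1)))^2
      = ∏ t : Fin (m+1), ((if j t = i0 m then (1:ℝ) else 0) + (if j t = i1 m then 1 else 0)) := by
  rw [Uex_coef, ← Finset.prod_pow]
  refine Finset.prod_congr rfl fun t _ => ?_
  rw [Pi.single_apply, Pi.single_apply]
  by_cases h0 : j t = i0 m <;> by_cases h1 : j t = i1 m
  · exact absurd (h0.symm.trans h1) (i0_ne_i1 m)
  · rw [if_pos h0.symm, if_neg (fun hh => h1 hh.symm), if_pos h0, if_neg h1]
    ring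
  · rw [if_neg (fun hh => h0 hh.symm), if_pos h1.symm, if_neg h0, if_pos h1]
    have := sg_mul_self ((EE m).symm j₁ t)
    nlinarith [this]
  · rw [if_neg (fun hh => h0 hh.symm), if_neg (fun hh => h1 hh.symm), if_neg h0, if_neg h1]
    ring

lemma inner_sum (j₁ : Fin (NN m)) :
    ∑ j : Fin (m+1) → Fin (NN m),
      (Uex m (Fin.cons (Pi.single j₁ 1) (fun i => Pi.single (j i) 1)))^2 = 2^(m+1) := by
  calc ∑ j : Fin (m+1) → Fin (NN m),
      (Uex m (Fin.cons (Pi.single j₁ 1) (fun i => Pi.single (j i) 1)))^2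
      = ∑ j : Fin (m+1) → Fin (NN m), ∏ t : Fin (m+1),
          ((if j t = i0 m then (1:ℝ) else 0) + (if j t = i1 m then 1 else 0)) :=
        Finset.sum_congr rfl fun j _ => coef_sq m j₁ j
    _ = ∏ t : Fin (m+1), ∑ k : Fin (NN m),
          ((if k = i0 m then (1:ℝ) else 0) + (if k = i1 m then 1 else 0)) :=
        sum_pi_prod (fun (t : Fin (m+1)) (k : Fin (NN m)) =>
          (if k = i0 m then (1:ℝ) else 0) + (if k = i1 m then 1 else 0))
    _ = 2^(m+1) := by
        have : ∀ t : Fin (m+1), ∑ k : Fin (NN m),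
            ((if k = i0 m then (1:ℝ) else 0) + (if k = i1 m then 1 else 0)) = 2 := by
          intro t
          rw [Finset.sum_add_distrib,
            Finset.sum_ite_eq' Finset.univ (i0 m) (fun _ => (1:ℝ)),
            Finset.sum_ite_eq' Finset.univ (i1 m) (fun _ => (1:ℝ))]
          norm_num
        rw [Finset.prod_congr rfl (fun t _ => this t), Finset.prod_const,
          Finset.card_univ, Fintype.card_fin]

lemma abs_pair_le (u v M : ℝ) (hu : |u| ≤ M) (hv : |v| ≤ M) :
    |u + v| + |u - v| ≤ 2 * M := by
  rcases abs_cases (u+v) with ⟨h1,_⟩|⟨h1,_⟩ <;> rcases abs_cases (u-v) with ⟨h2,_⟩|⟨h2,_⟩ <;>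
    rcases abs_cases u with ⟨h3,_⟩|⟨h3,_⟩ <;> rcases abs_cases v with ⟨h4,_⟩|⟨h4,_⟩ <;> linarith

lemma Uex_norm_le : ‖Uex m‖ ≤ 2^(m+1) := by
  apply ContinuousMultilinearMap.opNorm_le_bound (by positivity)
  intro x
  rw [Uex_apply, Real.norm_eq_abs]
  calc |∑ b : Fin (m+1) → Bool, (x 0 (EE m b)) *
        ∏ t : Fin (m+1), (x t.succ (i0 m) + sg (b t) * x t.succ (i1 m))|
      ≤ ∑ b : Fin (m+1) → Bool, |x 0 (EE m b)| *
        ∏ t : Fin (m+1), |x t.succ (i0 m) + sg (b t) * x t.succ (i1 m)| := by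
        refine le_trans (Finset.abs_sum_le_sum_abs _ _) ?_
        refine Finset.sum_le_sum fun b _ => ?_
        rw [abs_mul, Finset.abs_prod]
    _ ≤ ∑ b : Fin (m+1) → Bool, ‖x 0‖ *
        ∏ t : Fin (m+1), |x t.succ (i0 m) + sg (b t) * x t.succ (i1 m)| := by
        refine Finset.sum_le_sum fun b _ => ?_
        apply mul_le_mul_of_nonneg_right _ (Finset.prod_nonneg fun t _ => abs_nonneg _)
        have := norm_le_pi_norm (x 0) (EE m b)
        simpa using this
    _ = ‖x 0‖ * ∑ b : Fin (m+1) → Bool,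
        ∏ t : Fin (m+1), |x t.succ (i0 m) + sg (b t) * x t.succ (i1 m)| := by
        rw [Finset.mul_sum]
    _ = ‖x 0‖ * ∏ t : Fin (m+1), ∑ β : Bool, |x t.succ (i0 m) + sg β * x t.succ (i1 m)| := by
        congr 1
        exact sum_pi_prod (fun (t : Fin (m+1)) (β : Bool) => |x t.succ (i0 m) + sg β * x t.succ (i1 m)|)
    _ ≤ ‖x 0‖ * ∏ t : Fin (m+1), (2 * ‖x t.succ‖) := by
        apply mul_le_mul_of_nonneg_left _ (norm_nonneg _)
        apply Finset.prod_le_prod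
        · intro t _
          exact Finset.sum_nonneg fun β _ => abs_nonneg _
        · intro t _
          rw [Fintype.sum_bool]
          have h0 : |x t.succ (i0 m)| ≤ ‖x t.succ‖ := by
            have := norm_le_pi_norm (x t.succ) (i0 m); simpa using this
          have h1 : |x t.succ (i1 m)| ≤ ‖x t.succ‖ := by
            have := norm_le_pi_norm (x t.succ) (i1 m); simpa using this
          have e1 : x t.succ (i0 m) + sg true * x t.succ (i1 m)
              = x t.succ (i0 m) - x t.succ (i1 m) := by norm_num [sg]; ring
          have e2 : x t.succ (i0 m) + sg false * x t.succ (i1 m)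
              = x t.succ (i0 m) + x t.succ (i1 m) := by norm_num [sg]
          rw [e1, e2]
          linarith [abs_pair_le (x t.succ (i0 m)) (x t.succ (i1 m)) (‖x t.succ‖) h0 h1]
    _ = 2^(m+1) * ∏ i : Fin (m+2), ‖x i‖ := by
        rw [Finset.prod_mul_distrib, Finset.prod_const, Fin.prod_univ_succ (fun i => ‖x i‖)]
        simp only [Finset.card_univ, Fintype.card_fin]
        ring

theorem lower_bound (C : ℝ) (hC0 : 0 ≤ C)
    (h : ∑ j₁ : Fin (NN m), Real.sqrt (∑ j : Fin (m + 1) → Fin (NN m),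
        |Uex m (Fin.cons (Pi.single j₁ 1) (fun i => Pi.single (j i) 1))| ^ 2)
      ≤ C * ‖Uex m‖) :
    Real.sqrt 2 ^ (m+1) ≤ C := by
  have hsqrt : ∀ j₁ : Fin (NN m), Real.sqrt (∑ j : Fin (m + 1) → Fin (NN m),
      |Uex m (Fin.cons (Pi.single j₁ 1) (fun i => Pi.single (j i) 1))| ^ 2)
      = Real.sqrt 2 ^ (m+1) := by
    intro j₁
    have h1 : ∑ j : Fin (m + 1) → Fin (NN m),
        |Uex m (Fin.cons (Pi.single j₁ 1) (fun i => Pi.single (j i) 1))| ^ 2 = 2^(m+1) := by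
      simp_rw [sq_abs]
      exact inner_sum m j₁
    rw [h1]
    have h2 : (2:ℝ)^(m+1) = (Real.sqrt 2 ^ (m+1))^2 := by
      rw [← pow_mul, mul_comm, pow_mul, Real.sq_sqrt (by norm_num)]
    rw [h2, Real.sqrt_sq (by positivity)]
  rw [Finset.sum_congr rfl (fun j₁ _ => hsqrt j₁), Finset.sum_const, Finset.card_univ,
    Fintype.card_fin, nsmul_eq_mul] at h
  have hN : ((NN m : ℕ) : ℝ) = 2^(m+1) := by
    rw [NN]; push_cast; ring
  rw [hN] at h
  have hnorm := Uex_norm_le m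
  have hUnn : (0:ℝ) ≤ ‖Uex m‖ := norm_nonneg _
  have : (2:ℝ)^(m+1) * Real.sqrt 2 ^ (m+1) ≤ C * 2^(m+1) := by
    calc (2:ℝ)^(m+1) * Real.sqrt 2 ^ (m+1) ≤ C * ‖Uex m‖ := h
      _ ≤ C * 2^(m+1) := mul_le_mul_of_nonneg_left hnorm hC0
  have hpow : (0:ℝ) < 2^(m+1) := by positivity
  nlinarith [this, hpow]

end LowerBound

end Littlewood

/-- **The optimal constant of the mixed (ℓ₁,ℓ₂)-Littlewood inequality is `(√2)^{m-1}`.**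
For every integer `m ≥ 2` (written as `m + 2`), the least constant `C ≥ 0` such that
`∑_{j₁} (∑_{j₂,...,j_m} |U(e_{j₁},...,e_{j_m})|²)^{1/2} ≤ C ‖U‖` for every positive
integer `N` and every continuous `m`-linear form `U` on `(ℝ^N)^m` (sup norm) is exactly
`(√2)^{m-1}`; in particular the infimum is attained. -/
theorem mixed_littlewood_optimal_constant (m : ℕ) :
    IsLeast {C : ℝ | 0 ≤ C ∧ ∀ N : ℕ, 0 < N →
      ∀ U : ContinuousMultilinearMap ℝ (fun _ : Fin (m + 2) => (Fin N → ℝ)) ℝ,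
        ∑ j₁ : Fin N, Real.sqrt (∑ j : Fin (m + 1) → Fin N,
            |U (Fin.cons (Pi.single j₁ 1) (fun i => Pi.single (j i) 1))| ^ 2)
          ≤ C * ‖U‖}
      (Real.sqrt 2 ^ (m + 1)) := by
  constructor
  · refine ⟨by positivity, fun N hN U => ?_⟩
    exact Littlewood.membership U
  · intro C hC
    obtain ⟨hC0, hcond⟩ := hC
    exact Littlewood.lower_bound m C hC0
      (hcond (Littlewood.NN m) (Littlewood.NN_pos m) (Littlewood.Uex m))
end

section
/- Let T_m : (ℝ^{2^{m-1}})^m → ℝ (m ≥ 2) be the m-linear forms defined inductively by T₂(x,y) = x₁y₁ + x₁y₂ + x₂y₁ − x₂y₂ and T_m(x¹,...,x^m) = (x^m₁ + x^m₂)·T_{m-1}(x¹,...,x^{m-1}) + (x^m₁ − x^m₂)·T_{m-1}(B^{2^{m-2}}x¹, B^{2^{m-2}}x², B^{2^{m-3}}x³, ..., B²x^{m-1}), where B is the backward shift operator. Then Σ_{i₁=1}^{2^{m-1}} ( Σ_{i₂,...,i_m=1}^{2^{m-1}} |T_m(e_{i₁},...,e_{i_m})|² )^{1/2} = 2^{m-1}·(√2)^{m-1}.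 -/
/-- The backward shift operator on sequences: `(B x)ᵢ = x_{i+1}`. -/
def backShift (x : ℕ → ℝ) : ℕ → ℝ := fun n => x (n + 1)

/-- The inductively defined `m`-linear forms of Pellegrino:
`T₂(x,y) = x₁y₁ + x₁y₂ + x₂y₁ − x₂y₂` and, for `m ≥ 3`,
`T_m(x¹,...,x^m) = (x^m₁ + x^m₂)·T_{m-1}(x¹,...,x^{m-1})
  + (x^m₁ − x^m₂)·T_{m-1}(B^{2^{m-2}}x¹, B^{2^{m-2}}x², B^{2^{m-3}}x³, ..., B²x^{m-1})`,
defined here on `m`-tuples of sequences. -/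
def Tform : (m : ℕ) → (Fin m → (ℕ → ℝ)) → ℝ
  | 0, _ => 0
  | 1, _ => 0
  | 2, x => x 0 0 * x 1 0 + x 0 0 * x 1 1 + x 0 1 * x 1 0 - x 0 1 * x 1 1
  | (m + 3), x =>
      (x (Fin.last (m + 2)) 0 + x (Fin.last (m + 2)) 1) *
        Tform (m + 2) (fun i => x i.castSucc)
      + (x (Fin.last (m + 2)) 0 - x (Fin.last (m + 2)) 1) *
        Tform (m + 2) (fun i =>
          backShift^[if (i : ℕ) = 0 then 2 ^ (m + 1) else 2 ^ (m + 2 - (i : ℕ))]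
            (x i.castSucc))

/-- The standard basis vector `e_j` of `ℝ^{2^{m-1}}`, viewed as a sequence. -/
def stdBasis {d : ℕ} (j : Fin d) : ℕ → ℝ := fun n => if n = (j : ℕ) then 1 else 0

/-- basis sequence with integer index (zero if the index is negative). -/
def eInt (z : ℤ) : ℕ → ℝ := fun n => if (n : ℤ) = z then 1 else 0

/-- The elementary 2×2 sign pattern. -/
def hZ (a : ℕ) (b : ℤ) : ℝ :=
  if b = 2 * ((a / 2 : ℕ) : ℤ) ∨ b = 2 * ((a / 2 : ℕ) : ℤ) + 1 then
    (if a % 2 = 1 ∧ b = 2 * ((a / 2 : ℕ) : ℤ) + 1 then -1 else 1) else 0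

lemma backShift_iterate (k : ℕ) (x : ℕ → ℝ) (n : ℕ) :
    backShift^[k] x n = x (n + k) := by
  induction k generalizing x n with
  | zero => simp
  | succ k ih =>
      rw [Function.iterate_succ_apply, ih]
      show x (n + k + 1) = x (n + (k+1))
      ring_nf

lemma backShift_eInt (k : ℕ) (z : ℤ) :
    backShift^[k] (eInt z) = eInt (z - k) := by
  funext n
  rw [backShift_iterate]
  have h : ((n + k : ℕ) : ℤ) = z ↔ (n : ℤ) = z - k := by push_cast; omega
  simp only [eInt, h]

lemma stdBasis_eq_eInt {d : ℕ} (j : Fin d) : stdBasis j = eInt (j : ℕ) := by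
  funext n
  simp only [stdBasis, eInt, Nat.cast_inj]

lemma key_neg : ∀ (m : ℕ) (j : Fin (m+2) → ℤ), j 0 < 0 →
    Tform (m+2) (fun i => eInt (j i)) = 0
  | 0, j, h => by
      have e0 : eInt (j 0) 0 = 0 := by simp only [eInt, Nat.cast_zero, ite_eq_right_iff]; omega
      have e1 : eInt (j 0) 1 = 0 := by simp only [eInt, Nat.cast_one, ite_eq_right_iff]; omega
      show eInt (j 0) 0 * _ + eInt (j 0) 0 * _ + eInt (j 0) 1 * _ - eInt (j 0) 1 * _ = 0
      rw [e0, e1]; ring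
  | (m+1), j, h => by
      have hA := key_neg m (fun i => j i.castSucc) (by simpa using h)
      have hB := key_neg m
        (fun i => j i.castSucc -
          ((if (i : ℕ) = 0 then 2 ^ (m + 1) else 2 ^ (m + 2 - (i : ℕ)) : ℕ) : ℤ))
        (by
          simp only [Fin.castSucc_zero, Fin.val_zero, if_pos rfl]
          have hp : (0:ℤ) ≤ ((2^(m+1) : ℕ) : ℤ) := by positivity
          omega)
      show _ * Tform (m + 2) (fun i => eInt (j i.castSucc))
          + _ * Tform (m + 2) (fun i =>
            backShift^[if (i : ℕ) = 0 then 2 ^ (m + 1) else 2 ^ (m + 2 - (i : ℕ))]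
              (eInt (j i.castSucc))) = 0
      rw [show (fun i : Fin (m+2) =>
            backShift^[if (i : ℕ) = 0 then 2 ^ (m + 1) else 2 ^ (m + 2 - (i : ℕ))]
              (eInt (j i.castSucc)))
          = fun i : Fin (m+2) => eInt (j i.castSucc -
              ((if (i : ℕ) = 0 then 2 ^ (m + 1) else 2 ^ (m + 2 - (i : ℕ)) : ℕ) : ℤ)) from
        funext fun i => backShift_eInt _ _]
      rw [hA, hB]; ring

lemma hZ_congr (a a' t : ℕ) (b : ℤ) (h1 : a / 2 = a' / 2 + t) (h2 : a % 2 = a' % 2) :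
    hZ a b = hZ a' (b - 2 * (t : ℤ)) := by
  unfold hZ
  have c1 : ((a / 2 : ℕ) : ℤ) = ((a' / 2 : ℕ) : ℤ) + (t : ℤ) := by exact_mod_cast congrArg (Nat.cast : ℕ → ℤ) h1
  rw [c1, h2]
  refine if_congr (by omega) (if_congr (by omega) rfl rfl) rfl

lemma hZ_shift (k i r : ℕ) (hik : i ≤ k) (b : ℤ) :
    hZ ((r + 2 ^ (k + 1)) / 2 ^ i) b = hZ (r / 2 ^ i) (b - 2 ^ (k + 1 - i)) := by
  have h2 : (0:ℕ) < 2 ^ i := by positivity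
  have hpow : 2 ^ (k + 1) = 2 ^ (k + 1 - i) * 2 ^ i := by
    rw [← pow_add]; congr 1; omega
  have hdiv : (r + 2 ^ (k + 1)) / 2 ^ i = r / 2 ^ i + 2 ^ (k + 1 - i) := by
    rw [hpow, Nat.add_mul_div_right _ _ h2]
  have hsplit : 2 ^ (k + 1 - i) = 2 * 2 ^ (k - i) := by
    rw [← pow_succ']; congr 1; omega
  have hcast : (2 : ℤ) * ((2 ^ (k - i) : ℕ) : ℤ) = 2 ^ (k + 1 - i) := by
    push_cast
    rw [← pow_succ']; congr 1; omega
  rw [hZ_congr ((r + 2 ^ (k + 1)) / 2 ^ i) (r / 2 ^ i) (2 ^ (k - i)) b (by omega) (by omega),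
    hcast]

lemma hZ_zero (L : ℤ) : hZ 0 L = eInt L 0 + eInt L 1 := by
  unfold hZ eInt
  norm_num
  split_ifs <;> first | (exfalso; omega) | norm_num

lemma hZ_one (L : ℤ) : hZ 1 L = eInt L 0 - eInt L 1 := by
  unfold hZ eInt
  norm_num
  split_ifs <;> first | (exfalso; omega) | norm_num

lemma key : ∀ (m : ℕ) (a : ℕ) (j : Fin (m+2) → ℤ), j 0 = (a : ℤ) →
    Tform (m+2) (fun i => eInt (j i)) =
      (if a < 2 ^ (m+1) then (1:ℝ) else 0) *
        ∏ i : Fin (m+1), hZ (a / 2 ^ (i : ℕ)) (j i.succ)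
  | 0, a, j, h0 => by
      show eInt (j 0) 0 * eInt (j 1) 0 + eInt (j 0) 0 * eInt (j 1) 1
          + eInt (j 0) 1 * eInt (j 1) 0 - eInt (j 0) 1 * eInt (j 1) 1 = _
      rw [Fin.prod_univ_one]
      have hs : (0 : Fin 1).succ = (1 : Fin 2) := rfl
      rw [hs]
      simp only [eInt, hZ, h0, Fin.val_zero, pow_zero, Nat.div_one]
      norm_num
      split_ifs <;> first | (exfalso; omega) | norm_num
  | (m+1), a, j, h0 => by
      show (eInt (j (Fin.last (m+2))) 0 + eInt (j (Fin.last (m+2))) 1) *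
          Tform (m+2) (fun i => eInt (j i.castSucc))
        + (eInt (j (Fin.last (m+2))) 0 - eInt (j (Fin.last (m+2))) 1) *
          Tform (m+2) (fun i =>
            backShift^[if (i : ℕ) = 0 then 2 ^ (m + 1) else 2 ^ (m + 2 - (i : ℕ))]
              (eInt (j i.castSucc))) = _
      rw [show (fun i : Fin (m+2) =>
            backShift^[if (i : ℕ) = 0 then 2 ^ (m + 1) else 2 ^ (m + 2 - (i : ℕ))]
              (eInt (j i.castSucc)))
          = fun i : Fin (m+2) => eInt (j i.castSucc -
              ((if (i : ℕ) = 0 then 2 ^ (m + 1) else 2 ^ (m + 2 - (i : ℕ)) : ℕ) : ℤ)) from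
        funext fun i => backShift_eInt _ _]
      have hA : Tform (m+2) (fun i => eInt (j i.castSucc)) =
          (if a < 2 ^ (m+1) then (1:ℝ) else 0) *
            ∏ i : Fin (m+1), hZ (a / 2 ^ (i : ℕ)) (j i.succ.castSucc) :=
        key m a (fun i => j i.castSucc) (by simpa using h0)
      have hpow : 2 ^ (m+2) = 2 * 2 ^ (m+1) := by rw [pow_succ]; ring
      rw [Fin.prod_univ_castSucc
        (f := fun i : Fin (m+2) => hZ (a / 2 ^ (i : ℕ)) (j i.succ))]
      simp only [Fin.coe_castSucc, Fin.succ_castSucc, Fin.val_last, Fin.succ_last]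
      rw [hA]
      by_cases h1 : a < 2 ^ (m+1)
      · have hBz : Tform (m+2) (fun i => eInt (j i.castSucc -
              ((if (i : ℕ) = 0 then 2 ^ (m + 1) else 2 ^ (m + 2 - (i : ℕ)) : ℕ) : ℤ))) = 0 := by
          apply key_neg
          simp only [Fin.castSucc_zero, Fin.val_zero, reduceIte, h0]
          omega
        rw [hBz, if_pos h1, if_pos (by omega : a < 2 ^ (m+2))]
        have hdiv : a / 2 ^ (m+1) = 0 := Nat.div_eq_of_lt h1
        rw [hdiv, hZ_zero]
        ring
      · have hj0' : ∀ (r : ℕ), r = a - 2 ^ (m+1) → j 0 - ((2 ^ (m+1) : ℕ) : ℤ) = (r : ℤ) := by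
          intro r hr; rw [h0, hr]; omega
        have hB : Tform (m+2) (fun i => eInt (j i.castSucc -
              ((if (i : ℕ) = 0 then 2 ^ (m + 1) else 2 ^ (m + 2 - (i : ℕ)) : ℕ) : ℤ))) =
            (if a - 2 ^ (m+1) < 2 ^ (m+1) then (1:ℝ) else 0) *
              ∏ i : Fin (m+1), hZ ((a - 2 ^ (m+1)) / 2 ^ (i : ℕ))
                (j i.succ.castSucc - ((2 ^ (m + 1 - (i : ℕ)) : ℕ) : ℤ)) := by
          have := key m (a - 2 ^ (m+1))
            (fun i => j i.castSucc -
              ((if (i : ℕ) = 0 then 2 ^ (m + 1) else 2 ^ (m + 2 - (i : ℕ)) : ℕ) : ℤ))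
            (by simpa using hj0' _ rfl)
          rw [this]
          congr 1
          apply Finset.prod_congr rfl
          intro i _
          have hi : ((i.succ : Fin (m+2)) : ℕ) = (i : ℕ) + 1 := rfl
          show hZ _ (j i.succ.castSucc -
            ((if ((i.succ : Fin (m+2)) : ℕ) = 0 then 2 ^ (m + 1)
              else 2 ^ (m + 2 - ((i.succ : Fin (m+2)) : ℕ)) : ℕ) : ℤ)) = _
          rw [hi, if_neg (by omega : ¬ ((i : ℕ) + 1 = 0)),
            show m + 2 - ((i : ℕ) + 1) = m + 1 - (i : ℕ) from by omega]
        rw [hB, if_neg h1]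
        by_cases h2 : a < 2 ^ (m+2)
        · rw [if_pos h2, if_pos (by omega : a - 2 ^ (m+1) < 2 ^ (m+1))]
          have hprod : ∏ i : Fin (m+1), hZ ((a - 2 ^ (m+1)) / 2 ^ (i : ℕ))
                (j i.succ.castSucc - ((2 ^ (m + 1 - (i : ℕ)) : ℕ) : ℤ)) =
              ∏ i : Fin (m+1), hZ (a / 2 ^ (i : ℕ)) (j i.succ.castSucc) := by
            apply Finset.prod_congr rfl
            intro i _
            have hcast : ((2 ^ (m + 1 - (i : ℕ)) : ℕ) : ℤ) = (2:ℤ) ^ (m + 1 - (i : ℕ)) := by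
              push_cast; ring
            rw [hcast, ← hZ_shift m (i : ℕ) (a - 2 ^ (m+1)) (by omega : (i : ℕ) ≤ m)]
            congr 2
            omega
          rw [hprod]
          have hdiv1 : a / 2 ^ (m+1) = 1 :=
            Nat.div_eq_of_lt_le (by omega) (by omega)
          rw [hdiv1, hZ_one]
          ring
        · rw [if_neg h2, if_neg (by omega : ¬ (a - 2 ^ (m+1) < 2 ^ (m+1)))]
          ring

lemma hZ_sq (a : ℕ) (b : ℤ) : (hZ a b) ^ 2 =
    (if b = 2 * ((a / 2 : ℕ) : ℤ) then (1:ℝ) else 0)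
      + (if b = 2 * ((a / 2 : ℕ) : ℤ) + 1 then (1:ℝ) else 0) := by
  unfold hZ
  split_ifs <;> first | (exfalso; omega) | norm_num

lemma sum_hZ_sq (n a : ℕ) (ha : a < 2 ^ (n + 1)) :
    ∑ b : Fin (2 ^ (n + 1)), (hZ a ((b : ℕ) : ℤ)) ^ 2 = 2 := by
  have hpow : 2 ^ (n + 1) = 2 * 2 ^ n := by rw [pow_succ]; ring
  have h1 : 2 * (a / 2) < 2 ^ (n + 1) := by omega
  have h2 : 2 * (a / 2) + 1 < 2 ^ (n + 1) := by omega
  simp only [hZ_sq]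
  rw [Finset.sum_add_distrib]
  have e1 : ∑ b : Fin (2 ^ (n + 1)),
      (if ((b : ℕ) : ℤ) = 2 * ((a / 2 : ℕ) : ℤ) then (1:ℝ) else 0) = 1 := by
    have hc : ∀ b : Fin (2 ^ (n + 1)),
        (((b : ℕ) : ℤ) = 2 * ((a / 2 : ℕ) : ℤ)) ↔ (b = ⟨2 * (a / 2), h1⟩) := by
      intro b
      rw [Fin.ext_iff]
      show _ ↔ (b : ℕ) = 2 * (a / 2)
      omega
    simp only [hc]
    simp [Finset.sum_ite_eq']
  have e2 : ∑ b : Fin (2 ^ (n + 1)),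
      (if ((b : ℕ) : ℤ) = 2 * ((a / 2 : ℕ) : ℤ) + 1 then (1:ℝ) else 0) = 1 := by
    have hc : ∀ b : Fin (2 ^ (n + 1)),
        (((b : ℕ) : ℤ) = 2 * ((a / 2 : ℕ) : ℤ) + 1) ↔ (b = ⟨2 * (a / 2) + 1, h2⟩) := by
      intro b
      rw [Fin.ext_iff]
      show _ ↔ (b : ℕ) = 2 * (a / 2) + 1
      omega
    simp only [hc]
    simp [Finset.sum_ite_eq']
  rw [e1, e2]; norm_num

lemma sqrt_two_pow (n : ℕ) : Real.sqrt (2 ^ n) = Real.sqrt 2 ^ n := by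
  induction n with
  | zero => simp
  | succ n ih => rw [pow_succ, pow_succ, ← ih, ← Real.sqrt_mul (by positivity)]

/-- For the inductively defined `m`-linear forms `T_m` (here `m` is written as `m + 2`),
`∑_{i₁=1}^{2^{m-1}} (∑_{i₂,...,i_m=1}^{2^{m-1}} |T_m(e_{i₁},...,e_{i_m})|²)^{1/2}
  = 2^{m-1}·(√2)^{m-1}`. -/
theorem Tform_mixed_sum (m : ℕ) :
    ∑ j₁ : Fin (2 ^ (m + 1)), Real.sqrt (∑ j : Fin (m + 1) → Fin (2 ^ (m + 1)),
        |Tform (m + 2) (Fin.cons (stdBasis j₁) (fun i => stdBasis (j i)))| ^ 2)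
      = 2 ^ (m + 1) * Real.sqrt 2 ^ (m + 1) := by
  have hsq : ∀ (j₁ : Fin (2 ^ (m + 1))) (j : Fin (m + 1) → Fin (2 ^ (m + 1))),
      Tform (m + 2) (Fin.cons (stdBasis j₁) (fun i => stdBasis (j i))) =
        ∏ i : Fin (m + 1), hZ ((j₁ : ℕ) / 2 ^ (i : ℕ)) (((j i : ℕ) : ℤ)) := by
    intro j₁ j
    have htup : (Fin.cons (stdBasis j₁) (fun i => stdBasis (j i)) : Fin (m + 2) → ℕ → ℝ)
        = fun i => eInt ((Fin.cons ((j₁ : ℕ) : ℤ) (fun i => ((j i : ℕ) : ℤ)) :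
            Fin (m + 2) → ℤ) i) := by
      funext i
      refine Fin.cases ?_ ?_ i
      · simp [Fin.cons_zero, stdBasis_eq_eInt]
      · intro k; simp [Fin.cons_succ, stdBasis_eq_eInt]
    rw [htup, key m (j₁ : ℕ) _ (by simp), if_pos j₁.isLt]
    simp only [Fin.cons_succ, one_mul]
  have inner : ∀ j₁ : Fin (2 ^ (m + 1)),
      (∑ j : Fin (m + 1) → Fin (2 ^ (m + 1)),
        |Tform (m + 2) (Fin.cons (stdBasis j₁) (fun i => stdBasis (j i)))| ^ 2)
        = (2 : ℝ) ^ (m + 1) := by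
    intro j₁
    rw [Finset.sum_congr rfl (fun j _ => by
      rw [hsq j₁ j, sq_abs, ← Finset.prod_pow])]
    have hps := Finset.prod_univ_sum (fun _ : Fin (m + 1) => (Finset.univ : Finset (Fin (2 ^ (m + 1)))))
        (fun i b => (hZ ((j₁ : ℕ) / 2 ^ (i : ℕ)) (((b : Fin (2 ^ (m + 1))) : ℕ) : ℤ)) ^ 2)
    rw [Fintype.piFinset_univ] at hps
    rw [← hps]
    have h2 : ∀ i : Fin (m + 1),
        (∑ b : Fin (2 ^ (m + 1)), (hZ ((j₁ : ℕ) / 2 ^ (i : ℕ)) ((b : ℕ) : ℤ)) ^ 2) = (2:ℝ) :=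
      fun i => sum_hZ_sq m ((j₁ : ℕ) / 2 ^ (i : ℕ))
        (lt_of_le_of_lt (Nat.div_le_self _ _) j₁.isLt)
    simp only [h2]
    simp
  rw [Finset.sum_congr rfl (fun j₁ _ => by rw [inner j₁, sqrt_two_pow])]
  rw [Finset.sum_const, Finset.card_univ, Fintype.card_fin, nsmul_eq_mul]
  push_cast
  ring
end
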